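/- Let M1 and M2 be real symmetric 2×2 matrices with det(M1) > 0 and det(M2) > 0, and suppose M1 is not a scalar multiple of M2. Then there exists a real number μ such that det(M1 - μ·M2) < 0. -/

import Mathlib

/-- If `M1 = [[a,b],[b,c]]` and `M2 = [[p,q],[q,r]]` are real symmetric
2×2 matrices with positive determinants which are not proportional, then there is a
real `μ` with `det (M1 - μ • M2) < 0`. -/
theorem stmt_0 (a b c p q r : ℝ)
    (M1 M2 : Matrix (Fin 2) (Fin 2) ℝ)
    (hM1 : M1 = !![a, b; b, c]) (hM2 : M2 = !![p, q; q, r])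
    (hdet1 : 0 < M1.det) (hdet2 : 0 < M2.det)
    (hind : ∀ t : ℝ, M1 ≠ t • M2) :
    ∃ μ : ℝ, (M1 - μ • M2).det < 0 := by
  have hd1 : 0 < a*c - b*b := by
    simpa [hM1, Matrix.det_fin_two_of] using hdet1
  have hd2 : 0 < p*r - q*q := by
    simpa [hM2, Matrix.det_fin_two_of] using hdet2
  have hp : p ≠ 0 := by
    intro h0; rw [h0] at hd2; nlinarith
  have hdet : ∀ μ : ℝ, (M1 - μ • M2).det
      = (a - μ*p)*(c - μ*r) - (b - μ*q)*(b - μ*q) := by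
    intro μ
    have : M1 - μ • M2 = !![a - μ*p, b - μ*q; b - μ*q, c - μ*r] := by
      subst hM1 hM2
      ext i j
      fin_cases i <;> fin_cases j <;> simp [mul_comm]
    rw [this, Matrix.det_fin_two_of]
  by_cases h : a*q = b*p
  · -- then a*r ≠ c*p
    have har : a*r ≠ c*p := by
      intro he
      apply hind (a/p)
      subst hM1 hM2
      ext i j
      fin_cases i <;> fin_cases j <;>
        simp <;> field_simp <;> linarith [h, he]
    refine ⟨(a*r + c*p - 2*b*q)/(2*(p*r - q*q)), ?_⟩
    rw [hdet]
    set μ := (a*r + c*p - 2*b*q)/(2*(p*r - q*q)) with hμdef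
    have hμ : 2*(p*r - q*q)*μ = a*r + c*p - 2*b*q := by
      rw [hμdef]; field_simp; exact mul_div_cancel_left₀ _ (ne_of_gt (by nlinarith))
    have hD : 0 < (a*r - c*p)^2 := by have h0 := sub_ne_zero.mpr har; positivity
    have key : 4*(p*r - q*q)*((a - μ*p)*(c - μ*r) - (b - μ*q)*(b - μ*q))
        = -(a*r - c*p)^2 := by
      linear_combination (2*(p*r - q*q)*μ - (a*r + c*p - 2*b*q))*hμ
        - 4*(c*q - b*r)*h
    nlinarith [key, hD, hd2]
  · refine ⟨a/p, ?_⟩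
    rw [hdet]
    have h1 : a - (a/p)*p = 0 := by field_simp; ring
    have h2 : b - (a/p)*q ≠ 0 := by
      intro he
      apply h
      field_simp at he
      linarith
    rw [h1, zero_mul]
    have := mul_self_pos.mpr h2
    linarith
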